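/- Two-point to three-point representation: fix λ > 0 and let v(s) = (s, ψ_λ(s), s·ψ_λ(s)). For all 0 < p_1 < p_2 < 1 and every q ∈ [0,1], there exist p ∈ [0,1] and nonnegative reals x, y, z with x + y + z = 1 such that q·v(p_1) + (1−q)·v(p_2) = x·v(p) + y·v(0) + z·v(1). -/

import Mathlib

open Real

/-- Quantal response function `ψ_λ(p) = 1/(1 + exp(2λ(1−2p)))`. -/
noncomputable def psi (lam p : ℝ) : ℝ := 1 / (1 + Real.exp (2 * lam * (1 - 2 * p)))

/-- The curve point `v(s) = (s, ψ_λ(s), s·ψ_λ(s)) ∈ ℝ³`. -/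
noncomputable def vpoint (lam s : ℝ) : ℝ × ℝ × ℝ := (s, psi lam s, s * psi lam s)

private lemma rpow_base_continuous {x : ℝ} (hx : 0 < x) : Continuous fun t : ℝ => x ^ t := by
  have h : (fun t : ℝ => x ^ t) = fun t => Real.exp (Real.log x * t) := by
    funext t; rw [Real.rpow_def_of_pos hx]
  rw [h]
  exact Real.continuous_exp.comp (continuous_const.mul continuous_id)

private lemma logMean_integral {x : ℝ} (hx : 0 < x) (hx1 : x ≠ 1) :
    ∫ t in (0:ℝ)..1, x ^ t = (x - 1) / Real.log x := by
  have hL : Real.log x ≠ 0 := by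
    intro h
    rcases Real.log_eq_zero.mp h with h | h | h
    · exact hx.ne' h
    · exact hx1 h
    · nlinarith
  have hfun : (fun t : ℝ => x ^ t) = fun t => Real.exp (Real.log x * t) := by
    funext t; rw [Real.rpow_def_of_pos hx]
  rw [hfun, intervalIntegral.integral_comp_mul_left Real.exp hL, mul_zero, mul_one,
    integral_exp, Real.exp_log hx, Real.exp_zero, smul_eq_mul]
  field_simp

private lemma logMean_jensen {u v ρ σ m : ℝ} (hu : 0 < u) (hv : 0 < v)
    (hρ : 0 < ρ) (hσ : 0 < σ) (hu1 : u ≠ 1) (hv1 : v ≠ 1)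
    (hm0 : 0 < m) (hm1 : m ≠ 1) (hm : (ρ + σ) * m = ρ * u + σ * v) :
    ρ * ((u - 1) / Real.log u) + σ * ((v - 1) / Real.log v)
      ≤ (ρ + σ) * ((m - 1) / Real.log m) := by
  have hρσ : 0 < ρ + σ := by linarith
  have hconc : ∀ t ∈ Set.Icc (0:ℝ) 1, ρ * u ^ t + σ * v ^ t ≤ (ρ + σ) * m ^ t := by
    intro t ht
    have h := (Real.concaveOn_rpow ht.1 ht.2).2 (Set.mem_Ici.mpr hu.le) (Set.mem_Ici.mpr hv.le)
      (show 0 ≤ ρ/(ρ+σ) by positivity) (show 0 ≤ σ/(ρ+σ) by positivity)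
      (show ρ/(ρ+σ) + σ/(ρ+σ) = 1 by field_simp)
    have hmm : ρ/(ρ+σ) * u + σ/(ρ+σ) * v = m := by
      field_simp
      linear_combination -hm
    rw [smul_eq_mul, smul_eq_mul, smul_eq_mul, smul_eq_mul, hmm] at h
    calc ρ * u ^ t + σ * v ^ t = (ρ+σ) * (ρ/(ρ+σ) * u ^ t + σ/(ρ+σ) * v ^ t) := by
          field_simp
    _ ≤ (ρ+σ) * m ^ t := mul_le_mul_of_nonneg_left h hρσ.le
  have hInt : ∫ t in (0:ℝ)..1, (ρ * u ^ t + σ * v ^ t) ≤ ∫ t in (0:ℝ)..1, (ρ+σ) * m ^ t := by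
    apply intervalIntegral.integral_mono_on zero_le_one
    · exact ((continuous_const.mul (rpow_base_continuous hu)).add
        (continuous_const.mul (rpow_base_continuous hv))).intervalIntegrable _ _
    · exact (continuous_const.mul (rpow_base_continuous hm0)).intervalIntegrable _ _
    · intro t ht; exact hconc t ht
  rw [intervalIntegral.integral_add (f := fun t => ρ * u ^ t) (g := fun t => σ * v ^ t) ((continuous_const.mul (rpow_base_continuous hu)).intervalIntegrable _ _)
      ((continuous_const.mul (rpow_base_continuous hv)).intervalIntegrable _ _),
    intervalIntegral.integral_const_mul, intervalIntegral.integral_const_mul,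
    intervalIntegral.integral_const_mul, logMean_integral hu hu1, logMean_integral hv hv1,
    logMean_integral hm0 hm1] at hInt
  exact hInt

set_option maxHeartbeats 1000000

/-- **Two-point to three-point representation.** Fix `λ > 0`. For all `0 < p₁ < p₂ < 1`
and every `q ∈ [0,1]`, there exist `p ∈ [0,1]` and nonnegative reals `x, y, z` with
`x + y + z = 1` such that `q·v(p₁) + (1−q)·v(p₂) = x·v(p) + y·v(0) + z·v(1)`. -/
theorem two_point_to_three_point (lam : ℝ) (hlam : 0 < lam)
    (p1 p2 : ℝ) (hp1 : 0 < p1) (hp12 : p1 < p2) (hp2 : p2 < 1)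
    (q : ℝ) (hq : q ∈ Set.Icc (0 : ℝ) 1) :
    ∃ p ∈ Set.Icc (0 : ℝ) 1, ∃ x y z : ℝ,
      0 ≤ x ∧ 0 ≤ y ∧ 0 ≤ z ∧ x + y + z = 1 ∧
      q • vpoint lam p1 + (1 - q) • vpoint lam p2 =
        x • vpoint lam p + y • vpoint lam 0 + z • vpoint lam 1 := by
  obtain ⟨hq0, hq1⟩ := hq
  rcases eq_or_lt_of_le hq0 with hq0' | hq0'
  · refine ⟨p2, ⟨by linarith, hp2.le⟩, 1, 0, 0, by norm_num, by norm_num, by norm_num,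
      by norm_num, ?_⟩
    rw [← hq0']; simp
  rcases eq_or_lt_of_le hq1 with hq1' | hq1'
  · refine ⟨p1, ⟨hp1.le, by linarith⟩, 1, 0, 0, by norm_num, by norm_num, by norm_num,
      by norm_num, ?_⟩
    rw [hq1']; simp
  have hK0 : (0:ℝ) < 4 * lam := by linarith
  set K := 4 * lam with hK
  set E := Real.exp (2 * lam) with hE
  set W := Real.exp K with hW
  clear_value K
  set l1 := K * p1 with hl1
  set l2 := K * p2 with hl2
  clear_value l1 l2
  set w1 := Real.exp l1 with hw1
  set w2 := Real.exp l2 with hw2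
  clear_value E W w1 w2
  have hE0 : 0 < E := by rw [hE]; positivity
  have hW0 : 0 < W := by rw [hW]; positivity
  have hw10 : 0 < w1 := by rw [hw1]; positivity
  have hw20 : 0 < w2 := by rw [hw2]; positivity
  have hl10 : 0 < l1 := by rw [hl1]; positivity
  have hl12 : l1 < l2 := by rw [hl1, hl2]; nlinarith
  have hl20 : 0 < l2 := by linarith
  have hl2K : l2 < K := by rw [hl2, hK]; nlinarith
  have hl1K : l1 < K := by linarith
  have h1w1 : 1 < w1 := by rw [hw1, ← Real.exp_zero]; exact Real.exp_lt_exp.mpr hl10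
  have hw12 : w1 < w2 := by rw [hw1, hw2]; exact Real.exp_lt_exp.mpr hl12
  have hw2W : w2 < W := by rw [hw2, hW]; exact Real.exp_lt_exp.mpr hl2K
  have hw1W : w1 < W := by linarith
  have hlw1 : Real.log w1 = l1 := by rw [hw1]; exact Real.log_exp _
  have hlw2 : Real.log w2 = l2 := by rw [hw2]; exact Real.log_exp _
  have hlW : Real.log W = K := by rw [hW]; exact Real.log_exp _
  set a1 := q / (w1 + E) with ha1
  set a2 := (1 - q) / (w2 + E) with ha2
  have ha10 : 0 < a1 := div_pos hq0' (by linarith)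
  have ha20 : 0 < a2 := div_pos (by linarith) (by linarith)
  set S := a1 + a2 with hS
  set M1 := a1 * w1 + a2 * w2 with hM1
  set M2 := a1 * l1 + a2 * l2 with hM2
  set M3 := a1 * w1 * l1 + a2 * w2 * l2 with hM3
  set N2 := S * K - M2 with hN2
  set N3 := M1 * K - M3 with hN3
  clear_value a1 a2 S M1 M2 M3 N2 N3
  have hM20 : 0 < M2 := by rw [hM2]; exact add_pos (mul_pos ha10 hl10) (mul_pos ha20 hl20)
  have hN20 : 0 < N2 := by
    have hid : N2 = a1 * (K - l1) + a2 * (K - l2) := by rw [hN2, hS, hM2]; ring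
    rw [hid]
    have := mul_pos ha10 (sub_pos.mpr hl1K)
    have := mul_pos ha20 (sub_pos.mpr hl2K)
    linarith
  have hN3N2 : N2 < N3 := by
    have hid : N3 - N2 = a1 * ((w1-1)*(K-l1)) + a2 * ((w2-1)*(K-l2)) := by
      rw [hN2, hN3, hS, hM1, hM2, hM3]; ring
    have h1 := mul_pos ha10 (mul_pos (sub_pos.mpr h1w1) (sub_pos.mpr hl1K))
    have h2 := mul_pos ha20 (mul_pos (sub_pos.mpr (show (1:ℝ) < w2 by linarith)) (sub_pos.mpr hl2K))
    linarith
  have hN30 : 0 < N3 := by linarith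
  have hMW : 0 < M2 * W - M3 := by
    have hid : M2 * W - M3 = a1 * (l1*(W-w1)) + a2 * (l2*(W-w2)) := by
      rw [hM2, hM3]; ring
    have h1 := mul_pos ha10 (mul_pos hl10 (sub_pos.mpr hw1W))
    have h2 := mul_pos ha20 (mul_pos hl20 (sub_pos.mpr hw2W))
    linarith
  have hChe : M1 * M2 ≤ M3 * S := by
    have hid : M3 * S - M1 * M2 = a1 * a2 * ((w2-w1)*(l2-l1)) := by
      rw [hM1, hM2, hM3, hS]; ring
    have h1 := mul_nonneg (mul_nonneg ha10.le ha20.le)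
      (mul_nonneg (sub_nonneg.mpr hw12.le) (sub_nonneg.mpr hl12.le))
    linarith
  set ωb := M3 / M2 with hωb
  set ωm := N3 / N2 with hωm
  clear_value ωb ωm
  have hωm1 : 1 < ωm := by rw [hωm]; exact (one_lt_div hN20).mpr hN3N2
  have hmb : ωm ≤ ωb := by
    rw [hωm, hωb, div_le_div_iff₀ hN20 hM20, hN3, hN2]
    have h1 := mul_le_mul_of_nonneg_right hChe hK0.le
    have h2 : (M1*K - M3)*M2 = M1*M2*K - M3*M2 := by ring
    have h3 : M3*(S*K - M2) = M3*S*K - M3*M2 := by ring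
    have h4 : M1*M2*K = M1*M2*K := rfl
    rw [h2, h3]
    linarith [h1]
  have hbW : ωb < W := by rw [hωb, div_lt_iff₀ hM20]; linarith [hMW]
  have hωb1 : 1 < ωb := lt_of_lt_of_le hωm1 hmb
  have hωmW : ωm < W := lt_of_le_of_lt hmb hbW
  have hωm0 : 0 < ωm := by linarith
  have hωb0 : 0 < ωb := by linarith
  set H : ℝ → ℝ := fun ω => (M2*W - M3)*(ω-1)*K + (M3 - M2*ω)*(W-1)*Real.log ω
    - (M1 - S)*(W - ω)*Real.log ω*K with hH
  clear_value H
  have hHc : ContinuousOn H (Set.Icc ωm ωb) := by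
    have hlogC : ContinuousOn Real.log (Set.Icc ωm ωb) := by
      intro x hx
      have hx0 : x ≠ 0 := by
        have h1 := hx.1
        intro h; rw [h] at h1; linarith
      exact (Real.continuousAt_log hx0).continuousWithinAt
    rw [hH]
    exact (((continuousOn_const.mul (continuousOn_id.sub continuousOn_const)).mul
      continuousOn_const).add
      (((continuousOn_const.sub (continuousOn_const.mul continuousOn_id)).mul
        continuousOn_const).mul hlogC)).sub
      ((((continuousOn_const.mul (continuousOn_const.sub continuousOn_id)).mul hlogC)).mul
        continuousOn_const)
  -- Jensen at ωb
  set Lb := Real.log ωb with hLb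
  clear_value Lb
  have hLb0 : 0 < Lb := by rw [hLb]; exact Real.log_pos hωb1
  have hjC := logMean_jensen hw10 hw20 (mul_pos ha10 hl10) (mul_pos ha20 hl20)
    h1w1.ne' (show (1:ℝ) < w2 by linarith).ne' hωb0 hωb1.ne'
    (by rw [← hM2, hωb]
        have hcan2 : M2*(M3/M2) = M3 := by field_simp
        rw [hcan2, hM3]; ring)
  have hjC' : M1 - S ≤ M2 * ((ωb - 1) / Lb) := by
    have hLHS : a1*l1*((w1-1)/Real.log w1) + a2*l2*((w2-1)/Real.log w2) = M1 - S := by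
      rw [hlw1, hlw2, hM1, hS]
      field_simp
      ring
    rw [hLHS] at hjC
    calc M1 - S ≤ (a1*l1 + a2*l2) * ((ωb-1)/Real.log ωb) := hjC
      _ = M2 * ((ωb-1)/Lb) := by rw [← hM2, ← hLb]
  have hC : 0 ≤ H ωb := by
    have hMb : M2 * ωb = M3 := by rw [hωb]; field_simp
    have hHb : H ωb = K*(W-ωb)*(M2*(ωb-1) - (M1-S)*Lb) := by
      simp only [hH]
      rw [← hLb]
      linear_combination (K*(ωb-1) - (W-1)*Lb) * hMb
    have hbr : 0 ≤ M2*(ωb-1) - (M1-S)*Lb := by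
      have h2 := mul_le_mul_of_nonneg_right hjC' hLb0.le
      have h3 : M2*((ωb-1)/Lb)*Lb = M2*(ωb-1) := by field_simp
      rw [h3] at h2
      linarith
    rw [hHb]
    exact mul_nonneg (mul_pos hK0 (sub_pos.mpr hbW)).le hbr
  -- Jensen at ωm
  set Lm := Real.log ωm with hLm
  clear_value Lm
  have hLm0 : 0 < Lm := by rw [hLm]; exact Real.log_pos hωm1
  have hLmK : Lm < K := by
    have h := Real.log_lt_log hωm0 hωmW
    rw [hlW] at h
    rw [hLm]; exact h
  have hN2eq : N2 = a1*(K-l1) + a2*(K-l2) := by rw [hN2, hS, hM2]; ring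
  have hN3eq : N3 = a1*(K-l1)*w1 + a2*(K-l2)*w2 := by rw [hN3, hM1, hM3]; ring
  have hτ1 : 0 < a1*(K-l1) := mul_pos ha10 (sub_pos.mpr hl1K)
  have hτ2 : 0 < a2*(K-l2) := mul_pos ha20 (sub_pos.mpr hl2K)
  have hjB := logMean_jensen (div_pos hw10 hW0) (div_pos hw20 hW0) hτ1 hτ2
    ((div_lt_one hW0).mpr hw1W).ne ((div_lt_one hW0).mpr hw2W).ne
    (div_pos hωm0 hW0) ((div_lt_one hW0).mpr hωmW).ne
    (by rw [hωm, ← hN2eq]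
        have hcan : N2 * (N3/N2/W) = N3/W := by field_simp
        rw [hcan, hN3eq]; ring)
  have hlu1 : Real.log (w1/W) = l1 - K := by rw [Real.log_div hw10.ne' hW0.ne', hlw1, hlW]
  have hlu2 : Real.log (w2/W) = l2 - K := by rw [Real.log_div hw20.ne' hW0.ne', hlw2, hlW]
  have hlum : Real.log (ωm/W) = Lm - K := by
    rw [Real.log_div hωm0.ne' hW0.ne', hlW, ← hLm]
  have hLHSB : a1*(K-l1)*((w1/W - 1)/(l1-K)) + a2*(K-l2)*((w2/W - 1)/(l2-K))
      = (S*W - M1)/W := by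
    rw [hS, hM1]
    field_simp [sub_ne_zero.mpr hl1K.ne, sub_ne_zero.mpr hl2K.ne]
    ring
  have hRHSB : (a1*(K-l1) + a2*(K-l2))*((ωm/W - 1)/(Lm-K)) = (N2*(W-ωm))/(W*(K-Lm)) := by
    rw [← hN2eq]
    field_simp [sub_ne_zero.mpr hLmK.ne, sub_ne_zero.mpr hLmK.ne']
    ring
  rw [hlu1, hlu2, hlum, hLHSB, hRHSB] at hjB
  have hB1 : (S*W - M1)*(K - Lm) ≤ N2*(W - ωm) := by
    rw [div_le_div_iff₀ hW0 (mul_pos hW0 (sub_pos.mpr hLmK))] at hjB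
    have h5 : (S*W - M1)*(K-Lm)*W ≤ N2*(W-ωm)*W := by
      calc (S*W - M1)*(K-Lm)*W = (S*W-M1)*(W*(K-Lm)) := by ring
        _ ≤ N2*(W-ωm)*W := hjB
    exact le_of_mul_le_mul_right h5 hW0
  have hBneg : H ωm ≤ 0 := by
    have hNm : N2 * ωm = N3 := by rw [hωm]; field_simp
    rw [hN2, hN3] at hNm
    have hHm : H ωm = K*(ωm-1)*((S*W - M1)*(K - Lm) - N2*(W - ωm)) := by
      simp only [hH]
      rw [← hLm, hN2]
      linear_combination ((W-1)*Lm - (ωm-1)*K) * hNm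
    rw [hHm]
    have h6 : (S*W - M1)*(K - Lm) - N2*(W - ωm) ≤ 0 := by linarith
    exact mul_nonpos_of_nonneg_of_nonpos (mul_pos hK0 (sub_pos.mpr hωm1)).le h6
  -- IVT
  obtain ⟨ω, hωmem, hHω⟩ := intermediate_value_Icc hmb hHc ⟨hBneg, hC⟩
  obtain ⟨hωlo, hωhi⟩ := hωmem
  have hω1 : 1 < ω := lt_of_lt_of_le hωm1 hωlo
  have hω0 : 0 < ω := by linarith
  have hωW : ω < W := lt_of_le_of_lt hωhi hbW
  set L := Real.log ω with hL
  clear_value L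
  have hL0 : 0 < L := by rw [hL]; exact Real.log_pos hω1
  have hLK : L < K := by
    have h := Real.log_lt_log hω0 hωW
    rw [hlW] at h
    rw [hL]; exact h
  have hWω : 0 < W - ω := sub_pos.mpr hωW
  set c := (M2*W - M3)/((W - ω)*L) with hc
  set γ := (M3 - M2*ω)/((W - ω)*K) with hγ
  set β := S - c - γ with hβ
  clear_value c γ β
  have hc0 : 0 ≤ c := by rw [hc]; exact (div_pos hMW (mul_pos hWω hL0)).le
  have hγ0 : 0 ≤ γ := by
    have h3 : ω * M2 ≤ M3 := by
      have := hωhi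
      rw [hωb] at this
      exact (le_div_iff₀ hM20).mp this
    rw [hγ]
    exact div_nonneg (by linarith) (mul_pos hWω hK0).le
  have eq3 : c*L + γ*K = M2 := by
    rw [hc, hγ]
    field_simp
    ring
  have eq4 : c*ω*L + γ*W*K = M3 := by
    rw [hc, hγ]
    field_simp
    ring
  have eqS : β + c + γ = S := by rw [hβ]; ring
  have eq2 : β + c*ω + γ*W = M1 := by
    have hHe : (M2*W - M3)*(ω-1)*K + (M3 - M2*ω)*(W-1)*L - (M1 - S)*(W - ω)*L*K = 0 := by
      simp only [hH] at hHω
      rw [← hL] at hHω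
      exact hHω
    have hne1 : (W-ω)*L ≠ 0 := (mul_pos hWω hL0).ne'
    have hne2 : (W-ω)*K ≠ 0 := (mul_pos hWω hK0).ne'
    have e1 : c*(ω-1) = (M2*W - M3)*(ω-1)/((W-ω)*L) := by rw [hc]; ring
    have e2 : γ*(W-1) = (M3 - M2*ω)*(W-1)/((W-ω)*K) := by rw [hγ]; ring
    have key : (M2*W - M3)*(ω-1)/((W-ω)*L) + (M3 - M2*ω)*(W-1)/((W-ω)*K) = M1 - S := by
      rw [div_add_div _ _ hne1 hne2, div_eq_iff (mul_ne_zero hne1 hne2)]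
      linear_combination (W-ω)*hHe
    rw [hβ]
    linear_combination e1 + e2 + key
  have hβK : β*(K*(ω-1)) = ω*(S*K - M2) - (M1*K - M3) := by
    linear_combination ω*K*eqS - ω*eq3 - K*eq2 + eq4
  have hβ0 : 0 ≤ β := by
    have hωN : N3 ≤ ω*N2 := by
      have := hωlo
      rw [hωm] at this
      exact (div_le_iff₀ hN20).mp this
    have hβK' : β*(K*(ω-1)) = ω*N2 - N3 := by rw [hN2, hN3]; exact hβK
    have h7 : 0 < K*(ω-1) := mul_pos hK0 (sub_pos.mpr hω1)
    by_contra hb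
    push_neg at hb
    have h8 : β*(K*(ω-1)) < 0 := mul_neg_of_neg_of_pos hb h7
    rw [hβK'] at h8
    linarith
  -- the witnesses
  have hq1' : a1*(w1+E) = q := by
    rw [ha1]; exact div_mul_cancel₀ q (by linarith)
  have hq2' : a2*(w2+E) = 1 - q := by
    rw [ha2]; exact div_mul_cancel₀ (1-q) (by linarith)
  have hps : ∀ s : ℝ, psi lam s = Real.exp (4*lam*s)/(Real.exp (4*lam*s) + E) := by
    intro s
    rw [hE]
    unfold psi
    have h1 : 2*lam*(1-2*s) = 2*lam - 4*lam*s := by ring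
    rw [h1, Real.exp_sub]
    rw [div_eq_div_iff (by positivity) (by positivity)]
    field_simp
  have hv1 : psi lam p1 = w1/(w1+E) := by rw [hps p1, hw1, hl1, hK]
  have hv2 : psi lam p2 = w2/(w2+E) := by rw [hps p2, hw2, hl2, hK]
  have hv0 : psi lam 0 = 1/(1+E) := by rw [hps 0, mul_zero, Real.exp_zero]
  have hvI : psi lam 1 = W/(W+E) := by rw [hps 1, mul_one, hW, hK]
  have h4p : 4*lam*(L/K) = L := by rw [← hK]; field_simp
  have hvp : psi lam (L/K) = ω/(ω+E) := by rw [hps _, h4p, hL, Real.exp_log hω0]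
  have hp1' : p1 = l1/K := by rw [hl1]; field_simp [hK0.ne']
  have hp2' : p2 = l2/K := by rw [hl2]; field_simp [hK0.ne']
  have hwE1 : (0:ℝ) < w1 + E := by linarith
  have hwE2 : (0:ℝ) < w2 + E := by linarith
  have hωE : (0:ℝ) < ω + E := by linarith
  have hWE : (0:ℝ) < W + E := by linarith
  have h1E : (0:ℝ) < 1 + E := by linarith
  refine ⟨L/K, ⟨(div_nonneg hL0.le hK0.le), (div_le_one hK0).mpr hLK.le⟩,
    c*(ω+E), β*(1+E), γ*(W+E),
    mul_nonneg hc0 hωE.le, mul_nonneg hβ0 h1E.le, mul_nonneg hγ0 hWE.le, ?_, ?_⟩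
  · linear_combination eq2 + E*eqS + hM1 + E*hS + hq1' + hq2'
  · simp only [vpoint, Prod.smul_mk, smul_eq_mul, Prod.mk_add_mk, Prod.mk.injEq]
    rw [hv1, hv2, hv0, hvI, hvp, hp1', hp2']
    refine ⟨?_, ?_, ?_⟩
    · rw [← hq2', ← hq1']
      field_simp
      linear_combination -eq4 - E*eq3 - hM3 - E*hM2
    · rw [← hq2', ← hq1']
      have t1 : a1*(w1+E) * (w1/(w1+E)) = a1*w1 := by field_simp
      have t2 : a2*(w2+E) * (w2/(w2+E)) = a2*w2 := by field_simp
      have t3 : c*(ω+E) * (ω/(ω+E)) = c*ω := by field_simp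
      have t4 : β*(1+E) * (1/(1+E)) = β := by field_simp
      have t5 : γ*(W+E) * (W/(W+E)) = γ*W := by field_simp
      rw [t1, t2, t3, t4, t5]
      linear_combination -eq2 - hM1
    · rw [← hq2', ← hq1']
      have r1 : a1*(w1+E) * (l1/K * (w1/(w1+E))) = a1*w1*l1/K := by
        field_simp
        try ring
      have r2 : a2*(w2+E) * (l2/K * (w2/(w2+E))) = a2*w2*l2/K := by
        field_simp
        try ring
      have r3 : c*(ω+E) * (L/K * (ω/(ω+E))) = c*ω*L/K := by
        field_simp
        try ring
      have r4 : β*(1+E) * (0 * (1/(1+E))) = 0 := by ring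
      have r5 : γ*(W+E) * (1 * (W/(W+E))) = γ*W := by
        field_simp
      rw [r1, r2, r3, r4, r5]
      field_simp
      linear_combination -eq4 - hM3
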